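/- The robust growth rate in the Cox–Ingersoll–Ross example: let A > 1, B > 0 and ξ > 0, and define f : (0,∞) → (0,∞) by f(x) = ξ² (B^A / Γ(A)) x^A e^{−Bx}, where Γ is the Gamma function (so f = p·c with p the Gamma(A,B) density and c(x) = ξ² x). Then (1/8) ∫_0^∞ f'(x)² / f(x) dx = ξ² A B / (8 (A − 1)). -/

import Mathlib

open MeasureTheory Real Set

lemma cir_int_aux {B : ℝ} (hB : 0 < B) {s : ℝ} (hs : 0 < s) :
    IntegrableOn (fun x : ℝ => x ^ (s - 1) * Real.exp (-(B * x))) (Ioi 0) := by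
  have h := integrableOn_rpow_mul_exp_neg_mul_rpow (by linarith : (-1:ℝ) < s - 1) (p := 1) one_pos hB
  refine h.congr_fun (fun x hx => ?_) measurableSet_Ioi
  beta_reduce
  rw [Real.rpow_one, neg_mul]

/-- The robust growth rate in the Cox–Ingersoll–Ross example:
with `f(x) = ξ² (B^A/Γ(A)) x^A e^{−Bx}`,
`(1/8) ∫_0^∞ f'(x)²/f(x) dx = ξ² A B / (8(A−1))`. -/
theorem cir_growth_rate (A B ξ : ℝ) (hA : 1 < A) (hB : 0 < B) (hξ : 0 < ξ) :
    (1/8) * ∫ x in Set.Ioi (0:ℝ),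
        (deriv (fun y : ℝ =>
          ξ^2 * (B ^ A / Real.Gamma A) * y ^ A * Real.exp (-B * y)) x)^2 /
        (ξ^2 * (B ^ A / Real.Gamma A) * x ^ A * Real.exp (-B * x))
    = ξ^2 * A * B / (8 * (A - 1)) := by
  have hΓ : 0 < Real.Gamma A := Real.Gamma_pos_of_pos (by linarith)
  set C : ℝ := ξ^2 * (B ^ A / Real.Gamma A) with hC_def
  have hC : 0 < C := by
    have := Real.rpow_pos_of_pos hB A
    positivity
  -- rewrite the integrand on Ioi 0
  have hcongr : ∫ x in Ioi (0:ℝ),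
        (deriv (fun y : ℝ => C * y ^ A * Real.exp (-B * y)) x)^2 /
        (C * x ^ A * Real.exp (-B * x))
      = ∫ x in Ioi (0:ℝ),
        (C * A^2 * (x ^ (A - 1 - 1) * Real.exp (-(B * x)))
          - 2 * C * A * B * (x ^ (A - 1) * Real.exp (-(B * x))))
          + C * B^2 * (x ^ (A + 1 - 1) * Real.exp (-(B * x))) := by
    refine setIntegral_congr_fun measurableSet_Ioi (fun x hx => ?_)
    rw [mem_Ioi] at hx
    have h1 : HasDerivAt (fun y : ℝ => y ^ A) (A * x ^ (A - 1)) x :=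
      Real.hasDerivAt_rpow_const (Or.inl hx.ne')
    have h2 : HasDerivAt (fun y : ℝ => Real.exp (-B * y)) (Real.exp (-B * x) * (-B)) x := by
      simpa using ((hasDerivAt_id x).const_mul (-B)).exp
    have hd : HasDerivAt (fun y : ℝ => C * y ^ A * Real.exp (-B * y))
        (C * (A * x ^ (A - 1)) * Real.exp (-B * x)
          + C * x ^ A * (Real.exp (-B * x) * (-B))) x :=
      (h1.const_mul C).mul h2
    rw [hd.deriv]
    have hep : 0 < Real.exp (-B * x) := Real.exp_pos _
    have hxA : 0 < x ^ A := Real.rpow_pos_of_pos hx A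
    have r1 : x ^ (A - 1) = x ^ A / x := by rw [Real.rpow_sub hx, Real.rpow_one]
    have r2 : x ^ (A - 1 - 1) = x ^ A / x / x := by
      rw [Real.rpow_sub hx, Real.rpow_sub hx, Real.rpow_one]
    have r3 : x ^ (A + 1 - 1) = x ^ A := by norm_num
    rw [r1, r2, r3, neg_mul, show -(B * x) = -B * x by ring]
    field_simp
    ring
  rw [hcongr]
  -- integrability of the three pieces
  have i1 : IntegrableOn (fun x : ℝ => C * A^2 * (x ^ (A - 1 - 1) * Real.exp (-(B * x))))
      (Ioi 0) := (cir_int_aux hB (by linarith : (0:ℝ) < A - 1)).const_mul _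
  have i2 : IntegrableOn (fun x : ℝ => 2 * C * A * B * (x ^ (A - 1) * Real.exp (-(B * x))))
      (Ioi 0) := (cir_int_aux hB (by linarith : (0:ℝ) < A)).const_mul _
  have i3 : IntegrableOn (fun x : ℝ => C * B^2 * (x ^ (A + 1 - 1) * Real.exp (-(B * x))))
      (Ioi 0) := (cir_int_aux hB (by linarith : (0:ℝ) < A + 1)).const_mul _
  have i12 : IntegrableOn (fun x : ℝ => C * A^2 * (x ^ (A - 1 - 1) * Real.exp (-(B * x)))
      - 2 * C * A * B * (x ^ (A - 1) * Real.exp (-(B * x)))) (Ioi 0) := i1.sub i2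
  rw [integral_add i12 i3, integral_sub i1 i2, integral_const_mul, integral_const_mul,
    integral_const_mul,
    Real.integral_rpow_mul_exp_neg_mul_Ioi (by linarith : (0:ℝ) < A - 1) hB,
    Real.integral_rpow_mul_exp_neg_mul_Ioi (by linarith : (0:ℝ) < A) hB,
    Real.integral_rpow_mul_exp_neg_mul_Ioi (by linarith : (0:ℝ) < A + 1) hB]
  -- Gamma recurrences and power identities
  have hG : 0 < Real.Gamma (A - 1) := Real.Gamma_pos_of_pos (by linarith)
  have hGA : Real.Gamma A = (A - 1) * Real.Gamma (A - 1) := by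
    rw [show A = A - 1 + 1 by ring, Real.Gamma_add_one (by intro h; linarith [h]; )]
    ring_nf
  have hGA1 : Real.Gamma (A + 1) = A * Real.Gamma A := Real.Gamma_add_one (by linarith)
  have hb : (0:ℝ) < B ^ (A - 1) := Real.rpow_pos_of_pos hB _
  have e1 : (1/B) ^ (A - 1) = (B ^ (A - 1))⁻¹ := by rw [one_div, Real.inv_rpow hB.le]
  have e2 : (1/B) ^ A = (B ^ A)⁻¹ := by rw [one_div, Real.inv_rpow hB.le]
  have e3 : (1/B) ^ (A + 1) = (B ^ (A + 1))⁻¹ := by rw [one_div, Real.inv_rpow hB.le]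
  have pA1 : B ^ (A + 1) = B ^ A * B := (Real.rpow_add_one hB.ne' A)
  have pA : B ^ A = B ^ (A - 1) * B := by
    rw [← Real.rpow_add_one hB.ne' (A - 1)]; ring_nf
  rw [hGA1, e1, e2, e3, pA1, hGA, hC_def, pA]
  have hA1 : A - 1 ≠ 0 := by intro h; linarith [sub_eq_zero.mp h]
  field_simp
  rw [hGA]
  ring
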